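/- Let K ≥ 1, let c_1,…,c_{K-1} ≥ 0 be fixed rates for users 1,…,K−1, let R_1 ≥ R_2 ≥ … ≥ R_L ≥ 0 be the possible rates of user K, and let p, q be probability vectors on {1,…,L} with Σ_{l=1}^m q_l ≥ Σ_{l=1}^m p_l for every m. Define, for a probability vector μ on {1,…,L}, Γ_μ := { u ∈ ℝ^K : there exists φ : {1,…,K} × {1,…,L} → [0,1] with Σ_{k=1}^K φ(k,l) ≤ 1 for every l, u_k = c_k · Σ_l μ_l φ(k,l) for every k < K, and u_K = Σ_l μ_l φ(K,l) R_l }. Then Γ_p ⊆ Γ_q; i.e., replacing the last user's channel distribution by a stochastically dominating one enlarges the per-state feasible rate region. -/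

import Mathlib

open Finset

/-- The conditional rate region with users `0, …, n` (so `K = n + 1 ≥ 1` users): the
first `n` users have frozen rates `c k`, the state `l` of the last user varies with
distribution `μ` and gives it rate `R l`; at most one user is scheduled at a time
(idling allowed), `φ k l` being the fraction of time user `k` is scheduled while the
last user's state is `l`. -/
def CondRateRegion (n L : ℕ) (c : Fin n → ℝ) (R : Fin L → ℝ) (μ : Fin L → ℝ) :
    Set (Fin (n + 1) → ℝ) :=
  {u | ∃ φ : Fin (n + 1) → Fin L → ℝ,
    (∀ k l, φ k l ∈ Set.Icc (0 : ℝ) 1) ∧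
    (∀ l, ∑ k, φ k l ≤ 1) ∧
    (∀ k : Fin n, u k.castSucc = c k * ∑ l, μ l * φ k.castSucc l) ∧
    u (Fin.last n) = ∑ l, μ l * φ (Fin.last n) l * R l}

/-- Replacing the last user's channel distribution by a stochastically (prefix-sum)
dominating one enlarges the conditional feasible rate region: `Γ_p ⊆ Γ_q`. -/

lemma clamp_diff (A B x y : ℝ) (hBA : B ≤ A) (hxy : x ≤ y) :
    max B (min A y) - max B (min A x) = max 0 (min A y - max B x) := by
  rcases le_total A x with h1 | h1 <;> rcases le_total A y with h2 | h2 <;>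
    rcases le_total B x with h3 | h3 <;> rcases le_total B y with h4 | h4 <;>
    simp_all [max_def, min_def] <;> try (split_ifs <;> linarith)
  all_goals linarith

noncomputable def cdf {L : ℕ} (p : Fin L → ℝ) (m : ℕ) : ℝ :=
  ∑ l ∈ Finset.univ.filter (fun l : Fin L => (l : ℕ) < m), p l

lemma cdf_zero {L : ℕ} (p : Fin L → ℝ) : cdf p 0 = 0 := by simp [cdf]

lemma cdf_mono {L : ℕ} (p : Fin L → ℝ) (hp : ∀ l, 0 ≤ p l) : Monotone (cdf p) := by
  intro a b hab
  apply Finset.sum_le_sum_of_subset_of_nonneg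
  · intro l hl
    simp only [Finset.mem_filter] at *
    exact ⟨hl.1, lt_of_lt_of_le hl.2 hab⟩
  · intro l _ _; exact hp l

lemma cdf_succ {L : ℕ} (p : Fin L → ℝ) (i : Fin L) :
    cdf p ((i : ℕ) + 1) = cdf p i + p i := by
  have h : Finset.univ.filter (fun l : Fin L => (l : ℕ) < (i : ℕ) + 1)
      = insert i (Finset.univ.filter (fun l : Fin L => (l : ℕ) < (i : ℕ))) := by
    ext l; simp [Fin.ext_iff]; omega
  rw [cdf, h, Finset.sum_insert (by simp)]
  simp [cdf]; ring

lemma cdf_of_ge {L : ℕ} (p : Fin L → ℝ) (m : ℕ) (hm : L ≤ m) (h1 : ∑ l, p l = 1) :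
    cdf p m = 1 := by
  rw [cdf, Finset.filter_true_of_mem (fun l _ => lt_of_lt_of_le l.isLt hm), h1]

lemma cdf_nonneg {L : ℕ} (p : Fin L → ℝ) (hp : ∀ l, 0 ≤ p l) (m : ℕ) : 0 ≤ cdf p m :=
  Finset.sum_nonneg fun l _ => hp l

lemma cdf_le_one {L : ℕ} (p : Fin L → ℝ) (hp : ∀ l, 0 ≤ p l) (h1 : ∑ l, p l = 1) (m : ℕ) :
    cdf p m ≤ 1 := by
  rcases le_total m L with h | h
  · calc cdf p m ≤ cdf p L := cdf_mono p hp h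
      _ = 1 := cdf_of_ge p L le_rfl h1
  · exact le_of_eq (cdf_of_ge p m h h1)

theorem stmt5 (n L : ℕ) (hL : 1 ≤ L)
    (c : Fin n → ℝ) (hc : ∀ k, 0 ≤ c k)
    (R : Fin L → ℝ) (hR : Antitone R) (hRnn : ∀ l, 0 ≤ R l)
    (p q : Fin L → ℝ) (hp : ∀ l, 0 ≤ p l) (hq : ∀ l, 0 ≤ q l)
    (hp1 : ∑ l, p l = 1) (hq1 : ∑ l, q l = 1)
    (hdom : ∀ m : Fin L, ∑ l ∈ Finset.Iic m, p l ≤ ∑ l ∈ Finset.Iic m, q l) :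
    CondRateRegion n L c R p ⊆ CondRateRegion n L c R q := by
  rintro u ⟨φ, hφ01, hφsum, hφc, hφK⟩
  have hφnn : ∀ k l, 0 ≤ φ k l := fun k l => (hφ01 k l).1
  have hφle : ∀ k l, φ k l ≤ 1 := fun k l => (hφ01 k l).2
  have hPmono : Monotone (cdf p) := cdf_mono p hp
  have hQmono : Monotone (cdf q) := cdf_mono q hq
  -- domination in cdf form
  have hdom' : ∀ m : ℕ, cdf p m ≤ cdf q m := by
    intro m
    rcases Nat.eq_zero_or_pos m with rfl | hm
    · simp [cdf_zero]
    rcases le_or_gt L m with h | h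
    · rw [cdf_of_ge p m h hp1, cdf_of_ge q m h hq1]
    · obtain ⟨m', rfl⟩ := Nat.exists_eq_succ_of_ne_zero (by omega : m ≠ 0)
      have hm' : m' < L := by omega
      have hiic : ∀ r : Fin L → ℝ, ∑ l ∈ Finset.Iic (⟨m', hm'⟩ : Fin L), r l
          = cdf r (m' + 1) := by
        intro r
        rw [cdf]
        apply Finset.sum_congr _ (fun _ _ => rfl)
        ext l
        simp [Fin.le_def]
      rw [← hiic p, ← hiic q]
      exact hdom ⟨m', hm'⟩
  -- the monotone coupling
  set π : Fin L → Fin L → ℝ := fun i j =>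
    max 0 (min (cdf q ((i : ℕ) + 1)) (cdf p ((j : ℕ) + 1)) - max (cdf q i) (cdf p j))
    with hπdef
  have hπ : ∀ i j : Fin L, π i j =
      max 0 (min (cdf q ((i : ℕ) + 1)) (cdf p ((j : ℕ) + 1)) - max (cdf q i) (cdf p j)) :=
    fun i j => rfl
  have hπnn : ∀ i j, 0 ≤ π i j := fun i j => le_max_left _ _
  have hrow : ∀ i : Fin L, ∑ j, π i j = q i := by
    intro i
    have hBA : cdf q (i : ℕ) ≤ cdf q ((i : ℕ) + 1) := hQmono (Nat.le_succ _)
    set g : ℕ → ℝ := fun x => max (cdf q (i : ℕ)) (min (cdf q ((i : ℕ) + 1)) (cdf p x))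
      with hg
    have key : ∀ j : Fin L, π i j = g ((j : ℕ) + 1) - g (j : ℕ) := by
      intro j
      rw [hπ, hg]
      exact (clamp_diff _ _ _ _ hBA (hPmono (Nat.le_succ _))).symm
    have hgL : g L = cdf q ((i : ℕ) + 1) := by
      rw [hg]
      simp only
      rw [cdf_of_ge p L le_rfl hp1, min_eq_left (cdf_le_one q hq hq1 _), max_eq_right hBA]
    have hg0 : g 0 = cdf q (i : ℕ) := by
      rw [hg]
      simp only
      rw [cdf_zero, min_eq_right (cdf_nonneg q hq _), max_eq_left (cdf_nonneg q hq _)]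
    have hstep : cdf q ((i : ℕ) + 1) = cdf q (i : ℕ) + q i := cdf_succ q i
    calc ∑ j, π i j = ∑ j : Fin L, (g ((j : ℕ) + 1) - g (j : ℕ)) :=
          Finset.sum_congr rfl fun j _ => key j
      _ = ∑ j ∈ Finset.range L, (g (j + 1) - g j) :=
          Fin.sum_univ_eq_sum_range (fun x => g (x + 1) - g x) L
      _ = g L - g 0 := Finset.sum_range_sub g L
      _ = q i := by rw [hgL, hg0, hstep]; ring
  have hπle : ∀ i j, π i j ≤ q i := by
    intro i j
    rw [← hrow i]
    exact Finset.single_le_sum (fun j _ => hπnn i j) (Finset.mem_univ j)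
  have hcol : ∀ j : Fin L, ∑ i, π i j = p j := by
    intro j
    have hBA : cdf p (j : ℕ) ≤ cdf p ((j : ℕ) + 1) := hPmono (Nat.le_succ _)
    set g : ℕ → ℝ := fun x => max (cdf p (j : ℕ)) (min (cdf p ((j : ℕ) + 1)) (cdf q x))
      with hg
    have key : ∀ i : Fin L, π i j = g ((i : ℕ) + 1) - g (i : ℕ) := by
      intro i
      rw [hπ, hg, min_comm, max_comm (cdf q (i : ℕ))]
      exact (clamp_diff _ _ _ _ hBA (hQmono (Nat.le_succ _))).symm
    have hgL : g L = cdf p ((j : ℕ) + 1) := by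
      rw [hg]
      simp only
      rw [cdf_of_ge q L le_rfl hq1, min_eq_left (cdf_le_one p hp hp1 _), max_eq_right hBA]
    have hg0 : g 0 = cdf p (j : ℕ) := by
      rw [hg]
      simp only
      rw [cdf_zero, min_eq_right (cdf_nonneg p hp _), max_eq_left (cdf_nonneg p hp _)]
    have hstep : cdf p ((j : ℕ) + 1) = cdf p (j : ℕ) + p j := cdf_succ p j
    calc ∑ i, π i j = ∑ i : Fin L, (g ((i : ℕ) + 1) - g (i : ℕ)) :=
          Finset.sum_congr rfl fun i _ => key i
      _ = ∑ i ∈ Finset.range L, (g (i + 1) - g i) :=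
          Fin.sum_univ_eq_sum_range (fun x => g (x + 1) - g x) L
      _ = g L - g 0 := Finset.sum_range_sub g L
      _ = p j := by rw [hgL, hg0, hstep]; ring
  have hπsupp : ∀ i j : Fin L, (j : ℕ) < (i : ℕ) → π i j = 0 := by
    intro i j hij
    rw [hπ]
    apply max_eq_left
    have h1 : cdf p ((j : ℕ) + 1) ≤ cdf q ((j : ℕ) + 1) := hdom' _
    have h2 : cdf q ((j : ℕ) + 1) ≤ cdf q (i : ℕ) := hQmono (by omega)
    have h3 : min (cdf q ((i : ℕ) + 1)) (cdf p ((j : ℕ) + 1)) ≤ cdf p ((j : ℕ) + 1) :=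
      min_le_right _ _
    have h4 : cdf q (i : ℕ) ≤ max (cdf q (i : ℕ)) (cdf p (j : ℕ)) := le_max_left _ _
    linarith
  -- the transported schedule
  set ψ : Fin (n + 1) → Fin L → ℝ :=
    fun k l => if q l = 0 then 0 else (∑ j, π l j * φ k j) / q l with hψdef
  have hψ : ∀ k l, ψ k l = if q l = 0 then 0 else (∑ j, π l j * φ k j) / q l :=
    fun k l => rfl
  have hqψ : ∀ k l, q l * ψ k l = ∑ j, π l j * φ k j := by
    intro k l
    rw [hψ]
    by_cases h : q l = 0
    · rw [if_pos h, mul_zero]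
      symm
      apply Finset.sum_eq_zero
      intro j _
      have h0 : π l j = 0 := le_antisymm (h ▸ hπle l j) (hπnn l j)
      rw [h0, zero_mul]
    · rw [if_neg h]
      field_simp
  have hqpos : ∀ l, q l ≠ 0 → 0 < q l := fun l h => lt_of_le_of_ne (hq l) (Ne.symm h)
  have hψnn : ∀ k l, 0 ≤ ψ k l := by
    intro k l
    rw [hψ]
    by_cases h : q l = 0
    · simp [h]
    · rw [if_neg h]
      apply div_nonneg _ (hq l)
      exact Finset.sum_nonneg fun j _ => mul_nonneg (hπnn l j) (hφnn k j)
  have hψle : ∀ k l, ψ k l ≤ 1 := by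
    intro k l
    rw [hψ]
    by_cases h : q l = 0
    · simp [h]
    · rw [if_neg h, div_le_one (hqpos l h)]
      calc ∑ j, π l j * φ k j ≤ ∑ j, π l j * 1 :=
            Finset.sum_le_sum fun j _ => mul_le_mul_of_nonneg_left (hφle k j) (hπnn l j)
        _ = q l := by rw [← hrow l]; simp
  have hψsum : ∀ l, ∑ k, ψ k l ≤ 1 := by
    intro l
    by_cases h : q l = 0
    · rw [Finset.sum_congr rfl (fun k _ => hψ k l)]
      simp [h]
    · have heq : ∑ k, ψ k l = (∑ j, π l j * ∑ k, φ k j) / q l := by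
        rw [Finset.sum_congr rfl (fun k _ => hψ k l)]
        simp only [h, if_false, ← Finset.sum_div]
        congr 1
        rw [Finset.sum_comm]
        exact Finset.sum_congr rfl fun j _ => (Finset.mul_sum _ _ _).symm
      rw [heq, div_le_one (hqpos l h)]
      calc ∑ j, π l j * ∑ k, φ k j ≤ ∑ j, π l j * 1 :=
            Finset.sum_le_sum fun j _ => mul_le_mul_of_nonneg_left (hφsum j) (hπnn l j)
        _ = q l := by rw [← hrow l]; simp
  -- main transport identity
  have htrans : ∀ k, ∑ l, q l * ψ k l = ∑ j, p j * φ k j := by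
    intro k
    calc ∑ l, q l * ψ k l = ∑ l, ∑ j, π l j * φ k j :=
          Finset.sum_congr rfl fun l _ => hqψ k l
      _ = ∑ j, (∑ l, π l j) * φ k j := by
          rw [Finset.sum_comm]
          exact Finset.sum_congr rfl fun j _ => (Finset.sum_mul _ _ _).symm
      _ = ∑ j, p j * φ k j := Finset.sum_congr rfl fun j _ => by rw [hcol j]
  -- the last user's value
  have hSnn : (0 : ℝ) ≤ ∑ l, p l * φ (Fin.last n) l * R l :=
    Finset.sum_nonneg fun l _ => mul_nonneg (mul_nonneg (hp l) (hφnn _ l)) (hRnn l)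
  have hSV : ∑ l, p l * φ (Fin.last n) l * R l ≤ ∑ l, q l * ψ (Fin.last n) l * R l := by
    have hV2 : ∑ l, q l * ψ (Fin.last n) l * R l
        = ∑ l, ∑ j, π l j * φ (Fin.last n) j * R l := by
      refine Finset.sum_congr rfl fun l _ => ?_
      rw [hqψ, Finset.sum_mul]
    have hS2 : ∑ l, p l * φ (Fin.last n) l * R l
        = ∑ l, ∑ j, π l j * φ (Fin.last n) j * R j := by
      rw [Finset.sum_comm]
      refine Finset.sum_congr rfl fun j _ => ?_
      rw [← hcol j, Finset.sum_mul, Finset.sum_mul]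
    rw [hV2, hS2]
    refine Finset.sum_le_sum fun l _ => Finset.sum_le_sum fun j _ => ?_
    rcases lt_or_ge (j : ℕ) (l : ℕ) with h | h
    · rw [hπsupp l j h]
      simp
    · have hRlj : R j ≤ R l := hR h
      exact mul_le_mul_of_nonneg_left hRlj (mul_nonneg (hπnn l j) (hφnn _ j))
  have hVnn : (0 : ℝ) ≤ ∑ l, q l * ψ (Fin.last n) l * R l := le_trans hSnn hSV
  obtain ⟨t, ht0, ht1, htV⟩ : ∃ t : ℝ, 0 ≤ t ∧ t ≤ 1 ∧
      t * ∑ l, q l * ψ (Fin.last n) l * R l = ∑ l, p l * φ (Fin.last n) l * R l := by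
    by_cases h : (∑ l, q l * ψ (Fin.last n) l * R l) = 0
    · refine ⟨0, le_rfl, zero_le_one, ?_⟩
      rw [zero_mul]
      have : ∑ l, p l * φ (Fin.last n) l * R l ≤ 0 := h ▸ hSV
      linarith
    · refine ⟨(∑ l, p l * φ (Fin.last n) l * R l) / ∑ l, q l * ψ (Fin.last n) l * R l,
        div_nonneg hSnn hVnn, ?_, div_mul_cancel₀ _ h⟩
      rw [div_le_one (lt_of_le_of_ne hVnn (Ne.symm h))]
      exact hSV
  refine ⟨fun k l => if k = Fin.last n then t * ψ k l else ψ k l, ?_, ?_, ?_, ?_⟩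
  · intro k l
    constructor
    · dsimp only
      split_ifs
      · exact mul_nonneg ht0 (hψnn k l)
      · exact hψnn k l
    · dsimp only
      split_ifs
      · calc t * ψ k l ≤ 1 * 1 := mul_le_mul ht1 (hψle k l) (hψnn k l) zero_le_one
          _ = 1 := one_mul 1
      · exact hψle k l
  · intro l
    calc ∑ k, (if k = Fin.last n then t * ψ k l else ψ k l) ≤ ∑ k, ψ k l := by
          refine Finset.sum_le_sum fun k _ => ?_
          split_ifs
          · calc t * ψ k l ≤ 1 * ψ k l := mul_le_mul_of_nonneg_right ht1 (hψnn k l)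
              _ = ψ k l := one_mul _
          · exact le_refl _
      _ ≤ 1 := hψsum l
  · intro k
    have hne : k.castSucc ≠ Fin.last n := Fin.ne_of_lt (Fin.castSucc_lt_last k)
    simp only [hne, if_false]
    rw [hφc k, htrans k.castSucc]
  · rw [hφK]
    symm
    calc ∑ l, q l * (fun k l => if k = Fin.last n then t * ψ k l else ψ k l) (Fin.last n) l
            * R l
        = t * ∑ l, q l * ψ (Fin.last n) l * R l := by
          rw [Finset.mul_sum]
          refine Finset.sum_congr rfl fun l _ => ?_
          rw [show ((fun k l => if k = Fin.last n then t * ψ k l else ψ k l) (Fin.last n) l)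
              = t * ψ (Fin.last n) l from if_pos rfl]
          ring
      _ = ∑ l, p l * φ (Fin.last n) l * R l := htV
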